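/- (Theorem 4, quantitative form) Let (A, B, u_O, u_L) be a finite two-player bimatrix game in which the learner has exactly two actions (|B| = 2), with Stackelberg value V. For every ε > 0 there exists δ > 0 such that for every horizon T ≥ 1 and all sequences a^1, …, a^T ∈ A and b^1, …, b^T ∈ B: if the external regret max_{b ∈ B} Σ_{t=1}^T u_L(a^t, b) − Σ_{t=1}^T u_L(a^t, b^t) is at most δ·T, then the optimizer's total utility satisfies Σ_{t=1}^T u_O(a^t, b^t) ≤ (V + ε)·T. -/

import Mathlib

open Finset

/-- A probability distribution (mixed strategy) on a finite type. -/
def IsDist {X : Type*} [Fintype X] (f : X → ℝ) : Prop :=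
  (∀ x, 0 ≤ f x) ∧ ∑ x, f x = 1

/-- The set of optimizer utilities `u_O(α, b)` over pairs where `b` is a best
response to `α`; the Stackelberg value is its greatest element. -/
def StackSet {A B : Type*} [Fintype A] [Fintype B] (uO uL : A → B → ℝ) : Set ℝ :=
  {v | ∃ (α : A → ℝ) (b : B), IsDist α ∧
    (∀ b' : B, ∑ a, α a * uL a b' ≤ ∑ a, α a * uL a b) ∧
    v = ∑ a, α a * uO a b}

/-- Theorem 4 (quantitative form): when the learner has exactly two actions,
for every `ε > 0` there is `δ > 0` such that whenever the learner's external
regret is at most `δ·T`, the optimizer's total utility is at most `(V + ε)·T`,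
where `V` is the Stackelberg value. -/
lemma cont_lin {A : Type*} [Fintype A] (c : A → ℝ) :
    Continuous (fun α : A → ℝ => ∑ a, α a * c a) :=
  continuous_finset_sum univ fun a _ => (continuous_apply a).mul continuous_const

lemma compact_lemma {A B : Type*} [Fintype A] [Fintype B]
    (uO uL : A → B → ℝ) (V : ℝ) (hV : IsGreatest (StackSet uO uL) V) :
    ∀ ε : ℝ, 0 < ε → ∃ γ : ℝ, 0 < γ ∧ ∀ (α : A → ℝ) (b : B), IsDist α →
      (∀ b' : B, ∑ a, α a * uL a b' ≤ ∑ a, α a * uL a b + γ) →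
      ∑ a, α a * uO a b ≤ V + ε := by
  intro ε hε
  by_contra hcon
  push_neg at hcon
  have H : ∀ n : ℕ, ∃ (α : A → ℝ) (b : B), IsDist α ∧
      (∀ b' : B, ∑ a, α a * uL a b' ≤ ∑ a, α a * uL a b + 1 / (n + 1)) ∧
      V + ε < ∑ a, α a * uO a b := by
    intro n
    obtain ⟨α, b, h1, h2, h3⟩ := hcon (1 / ((n : ℝ) + 1)) (by positivity)
    exact ⟨α, b, h1, h2, h3⟩
  choose αs bs hd hbr hgt using H
  -- some b occurs infinitely often
  obtain ⟨bb, hbb⟩ := Finite.exists_infinite_fiber bs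
  have hinf : (bs ⁻¹' {bb}).Infinite := Set.infinite_coe_iff.mp hbb
  -- decreasing sequence of compact sets
  set D : ℕ → Set (A → ℝ) := fun n =>
    {α | IsDist α ∧ (∀ b' : B, ∑ a, α a * uL a b' ≤ ∑ a, α a * uL a bb + 1 / (n + 1)) ∧
      V + ε ≤ ∑ a, α a * uO a bb} with hD
  have hchain : ∀ n, D (n + 1) ⊆ D n := by
    intro n α ⟨h1, h2, h3⟩
    refine ⟨h1, fun b' => (h2 b').trans (add_le_add_right ?_ _), h3⟩
    apply one_div_le_one_div_of_le (by positivity)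
    push_cast; linarith
  have hne : ∀ n, (D n).Nonempty := by
    intro n
    obtain ⟨m, hm, hnm⟩ := hinf.exists_gt n
    have hbm : bs m = bb := hm
    refine ⟨αs m, hd m, fun b' => (hbr m b' |>.trans ?_) , ?_⟩
    · rw [hbm]
      apply add_le_add_right
      apply one_div_le_one_div_of_le (by positivity)
      have : (n:ℝ) ≤ m := by exact_mod_cast hnm.le
      push_cast; linarith
    · rw [← hbm]; exact (hgt m).le
  have hclosed : ∀ n, IsClosed (D n) := by
    intro n
    have e : D n = ((⋂ a, {α : A → ℝ | 0 ≤ α a}) ∩ {α | ∑ a, α a = 1}) ∩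
        ((⋂ b' : B, {α | ∑ a, α a * uL a b' ≤ ∑ a, α a * uL a bb + 1 / (n + 1)}) ∩
         {α | V + ε ≤ ∑ a, α a * uO a bb}) := by
      ext α
      simp only [hD, Set.mem_setOf_eq, Set.mem_inter_iff, Set.mem_iInter, IsDist]
    rw [e]
    refine IsClosed.inter (IsClosed.inter ?_ ?_) (IsClosed.inter ?_ ?_)
    · exact isClosed_iInter fun a => isClosed_le continuous_const (continuous_apply a)
    · exact isClosed_eq (continuous_finset_sum univ fun a _ => continuous_apply a)
        continuous_const
    · exact isClosed_iInter fun b' => isClosed_le (cont_lin _) ((cont_lin _).add continuous_const)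
    · exact isClosed_le continuous_const (cont_lin _)
  have hcomp : IsCompact (D 0) := by
    rw [Metric.isCompact_iff_isClosed_bounded]
    refine ⟨hclosed 0, Bornology.IsBounded.subset (Metric.isBounded_closedBall (x := (0 : A → ℝ)) (r := 1)) ?_⟩
    intro α hα
    rw [Metric.mem_closedBall, dist_zero_right]
    rw [pi_norm_le_iff_of_nonneg zero_le_one]
    intro a
    rw [Real.norm_eq_abs, abs_le]
    have h1 := hα.1.1
    have h2 := hα.1.2
    constructor
    · linarith [h1 a]
    · calc α a ≤ ∑ x, α x := Finset.single_le_sum (fun x _ => h1 x) (mem_univ a)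
        _ = 1 := h2
  obtain ⟨α, hα⟩ := IsCompact.nonempty_iInter_of_sequence_nonempty_isCompact_isClosed
    D hchain hne hcomp hclosed
  simp only [Set.mem_iInter] at hα
  have hdist : IsDist α := (hα 0).1
  have hbrexact : ∀ b' : B, ∑ a, α a * uL a b' ≤ ∑ a, α a * uL a bb := by
    intro b'
    apply le_of_forall_pos_le_add
    intro η hη
    obtain ⟨n, hn⟩ := exists_nat_one_div_lt hη
    exact ((hα n).2.1 b').trans (by linarith)
  have hmem : (∑ a, α a * uO a bb) ∈ StackSet uO uL := ⟨α, bb, hdist, hbrexact, rfl⟩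
  have := hV.2 hmem
  linarith [(hα 0).2.2]

theorem stmt9 {A B : Type*} [Fintype A] [Fintype B] [Nonempty A] [Nonempty B]
    (hB : Fintype.card B = 2)
    (uO uL : A → B → ℝ)
    (V : ℝ) (hV : IsGreatest (StackSet uO uL) V) :
    ∀ ε : ℝ, 0 < ε → ∃ δ : ℝ, 0 < δ ∧
      ∀ (T : ℕ), 1 ≤ T → ∀ (a : Fin T → A) (b : Fin T → B),
        ((univ.sup' univ_nonempty fun b' : B => ∑ t : Fin T, uL (a t) b')
            - ∑ t : Fin T, uL (a t) (b t) ≤ δ * T) →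
        ∑ t : Fin T, uO (a t) (b t) ≤ (V + ε) * T := by
  classical
  intro ε hε
  obtain ⟨γ, hγ, hlem⟩ := compact_lemma uO uL V hV (ε / 2) (by linarith)
  set M : ℝ := univ.sup' univ_nonempty (fun p : A × B => uO p.1 p.2) with hM
  have hMub : ∀ a' b', uO a' b' ≤ M := fun a' b' => le_sup' (fun p : A × B => uO p.1 p.2) (mem_univ (a', b'))
  have hVM : V ≤ M := by
    obtain ⟨α, b0, hd, _, heq⟩ := hV.1
    have : ∑ a, α a * uO a b0 ≤ ∑ a, α a * M :=
      Finset.sum_le_sum fun a _ => mul_le_mul_of_nonneg_left (hMub a b0) (hd.1 a)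
    rw [← Finset.sum_mul, hd.2, one_mul] at this
    linarith [heq ▸ this]
  set C : ℝ := M - V with hCdef
  have hC : 0 ≤ C := by simp [hCdef]; linarith
  refine ⟨min 1 (γ * ε / (4 * (C + 1))), lt_min one_pos (by positivity), ?_⟩
  set δ : ℝ := min 1 (γ * ε / (4 * (C + 1))) with hδdef
  have hδpos : 0 < δ := lt_min one_pos (by positivity)
  have hδle : δ * (4 * (C + 1)) ≤ γ * ε := by
    have h1 : δ ≤ γ * ε / (4 * (C + 1)) := min_le_right _ _
    rw [le_div_iff₀ (by positivity)] at h1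
    exact h1
  intro T hT a b hreg
  have hT' : (1 : ℝ) ≤ (T : ℝ) := by exact_mod_cast hT
  have hreg' : ∀ b' : B, ∑ t, uL (a t) b' - ∑ t, uL (a t) (b t) ≤ δ * T :=
    fun b' => le_trans (sub_le_sub_right (le_sup' (fun b' : B => ∑ t : Fin T, uL (a t) b') (mem_univ b')) _) hreg
  set S : B → Finset (Fin T) := fun c => univ.filter (fun t => b t = c) with hS
  set n : B → ℝ := fun c => ((S c).card : ℝ) with hn
  have hn0 : ∀ c, 0 ≤ n c := fun c => Nat.cast_nonneg _
  have part : ∀ f : Fin T → ℝ, ∑ c, ∑ t ∈ S c, f t = ∑ t, f t := fun f =>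
    Finset.sum_fiberwise_of_maps_to (fun t _ => mem_univ (b t)) f
  have key : ∀ w : A → B → ℝ, ∑ t, w (a t) (b t) = ∑ c, ∑ t ∈ S c, w (a t) c := by
    intro w
    rw [← Finset.sum_fiberwise_of_maps_to (fun t (_ : t ∈ univ) => mem_univ (b t))
      (fun t => w (a t) (b t))]
    refine Finset.sum_congr rfl fun c _ => Finset.sum_congr rfl fun t ht => ?_
    rw [(Finset.mem_filter.mp ht).2]
  -- per-action swap regret bound
  have hswap : ∀ c b' : B, ∑ t ∈ S c, uL (a t) b' - ∑ t ∈ S c, uL (a t) c ≤ δ * T := by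
    intro c b'
    rcases eq_or_ne b' c with rfl | hne
    · simp only [sub_self]
      positivity
    · have huniv : ({c, b'} : Finset B) = univ :=
        Finset.eq_of_subset_of_card_le (subset_univ _)
          (by rw [Finset.card_pair (Ne.symm hne), Finset.card_univ, hB])
      have e1 : ∑ t, uL (a t) b' = ∑ t ∈ S c, uL (a t) b' + ∑ t ∈ S b', uL (a t) b' := by
        rw [← part (fun t => uL (a t) b'), ← huniv, Finset.sum_pair (Ne.symm hne)]
      have e2 : ∑ t, uL (a t) (b t) = ∑ t ∈ S c, uL (a t) c + ∑ t ∈ S b', uL (a t) b' := by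
        rw [key uL, ← huniv, Finset.sum_pair (Ne.symm hne)]
      have := hreg' b'
      linarith
  -- per-fiber bound
  have main : ∀ c : B, ∑ t ∈ S c, uO (a t) c ≤ n c * (V + ε / 2) + δ * T / γ * C := by
    intro c
    rcases le_or_gt (δ * T / γ) (n c) with hbig | hsmall
    · -- empirical distribution on the fiber
      have hnpos : 0 < n c := lt_of_lt_of_le (by positivity) hbig
      set αc : A → ℝ := fun a' => (((S c).filter (fun t => a t = a')).card : ℝ) / n c with hαc
      have emp : ∀ w : A → ℝ, ∑ a', αc a' * w a' = (∑ t ∈ S c, w (a t)) / n c := by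
        intro w
        rw [eq_div_iff hnpos.ne', Finset.sum_mul]
        rw [← Finset.sum_fiberwise_of_maps_to (fun t (_ : t ∈ S c) => mem_univ (a t))
          (fun t => w (a t))]
        refine Finset.sum_congr rfl fun a' _ => ?_
        rw [hαc]
        have : ∑ t ∈ (S c).filter (fun t => a t = a'), w (a t)
            = (((S c).filter (fun t => a t = a')).card : ℝ) * w a' := by
          rw [Finset.sum_congr rfl fun t ht => by rw [(Finset.mem_filter.mp ht).2],
            Finset.sum_const, nsmul_eq_mul]
        rw [this]
        field_simp
      have hdist : IsDist αc := by
        constructor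
        · intro a'; exact div_nonneg (Nat.cast_nonneg _) (hn0 c)
        · rw [hαc]
          simp only
          rw [← Finset.sum_div]
          rw [div_eq_one_iff_eq hnpos.ne']
          show _ = ((S c).card : ℝ)
          exact_mod_cast (Finset.card_eq_sum_card_fiberwise
            (fun t (_ : t ∈ S c) => mem_univ (a t))).symm
      have happrox : ∀ b' : B, ∑ a', αc a' * uL a' b' ≤ ∑ a', αc a' * uL a' c + γ := by
        intro b'
        rw [emp (fun a' => uL a' b'), emp (fun a' => uL a' c)]
        have h1 : δ * T / n c ≤ γ := by
          rw [div_le_iff₀ hnpos]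
          rw [div_le_iff₀ hγ] at hbig
          linarith [mul_le_mul_of_nonneg_left hbig hγ.le]
        have h2 : (∑ t ∈ S c, uL (a t) b') / n c
            ≤ (∑ t ∈ S c, uL (a t) c) / n c + δ * T / n c := by
          rw [← add_div, div_le_div_iff₀ hnpos hnpos]
          have := hswap c b'
          nlinarith
        linarith
      have := hlem αc c hdist happrox
      rw [emp (fun a' => uO a' c)] at this
      rw [div_le_iff₀ hnpos] at this
      have hnng : 0 ≤ δ * T / γ * C := by positivity
      linarith
    · -- small fiber
      have h1 : ∑ t ∈ S c, uO (a t) c ≤ n c * M := by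
        calc ∑ t ∈ S c, uO (a t) c ≤ ∑ t ∈ S c, M :=
              Finset.sum_le_sum fun t _ => hMub _ _
          _ = n c * M := by rw [Finset.sum_const, nsmul_eq_mul]
      have h2 : n c * C ≤ δ * T / γ * C := mul_le_mul_of_nonneg_right hsmall.le hC
      nlinarith [hn0 c, hε]
  -- combine
  have total : ∑ t, uO (a t) (b t) ≤ (∑ c, n c) * (V + ε / 2) + 2 * (δ * T / γ * C) := by
    rw [key uO]
    calc ∑ c, ∑ t ∈ S c, uO (a t) c
        ≤ ∑ c : B, (n c * (V + ε / 2) + δ * T / γ * C) := Finset.sum_le_sum fun c _ => main c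
      _ = (∑ c, n c) * (V + ε / 2) + 2 * (δ * T / γ * C) := by
          rw [Finset.sum_add_distrib, ← Finset.sum_mul, Finset.sum_const, Finset.card_univ, hB]
          push_cast; ring
  have hsum : (∑ c, n c) = (T : ℝ) := by
    rw [hn]
    push_cast [← Nat.cast_sum]
    rw [← Finset.card_eq_sum_card_fiberwise (fun t (_ : t ∈ (univ : Finset (Fin T))) => mem_univ (b t))]
    simp
  rw [hsum] at total
  -- final arithmetic
  have hγT : 0 < γ := hγ
  have hfin : 2 * (δ * T / γ * C) ≤ ε / 2 * T := by
    have h4 : δ * (4 * (C + 1)) * T ≤ γ * ε * T :=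
      mul_le_mul_of_nonneg_right hδle (by positivity)
    rw [div_mul_eq_mul_div, ← mul_div_assoc, div_le_iff₀ hγ]
    nlinarith [hδpos.le, hT', hC, mul_nonneg hδpos.le (le_trans zero_le_one hT')]
  linarith [hfin]
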